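/- Let k ∈ ℕ₊, Y a finite set with |Y| ≥ 2, X a set, and let ℋ be a family of functions X^k → Y of the form H(x₁,...,x_k) = h(x_k) for h ranging over all functions X → Y (i.e., hypotheses depending only on the last coordinate, rank ≤ 1). If X is infinite, then VCN_k(ℋ) = ∞ and ℋ does not have the k-ary Haussler packing property with respect to the 0/1-loss ℓ_{0/1}(x, y, y') = 1[y ≠ y']. -/

import Mathlib

open MeasureTheory
open ENNReal

/-- Binary entropy function. -/
noncomputable def binEnt (t : ℝ) : ℝ :=
  t * Real.logb 2 (1 / t) + (1 - t) * Real.logb 2 (1 / (1 - t))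

/-- `ℱ` Natarajan-shatters the finite set `A`. -/
def NatShatters {X Y : Type*} [DecidableEq X] (ℱ : Set (X → Y)) (A : Finset X) : Prop :=
  ∃ f₀ f₁ : X → Y, (∀ a ∈ A, f₀ a ≠ f₁ a) ∧
    ∀ U ⊆ A, ∃ g ∈ ℱ, ∀ a ∈ A, g a = if a ∈ U then f₁ a else f₀ a

noncomputable def par19 {m : ℕ} (v w : Fin m → Bool) : ZMod 2 :=
  ∑ i, (if v i then (1 : ZMod 2) else 0) * (if w i then 1 else 0)

lemma par19_update {m : ℕ} (v w : Fin m → Bool) (i₀ : Fin m) :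
    par19 (Function.update v i₀ (!v i₀)) w = par19 v w + (if w i₀ then 1 else 0) := by
  unfold par19
  rw [← Finset.sum_erase_add _ _ (Finset.mem_univ i₀),
      ← Finset.sum_erase_add _ _ (Finset.mem_univ i₀)]
  have h1 : ∀ i ∈ Finset.univ.erase i₀,
      (if Function.update v i₀ (!v i₀) i then (1 : ZMod 2) else 0) * (if w i then 1 else 0)
      = (if v i then (1 : ZMod 2) else 0) * (if w i then 1 else 0) := by
    intro i hi
    rw [Function.update_of_ne (Finset.mem_erase.mp hi).1]
  rw [Finset.sum_congr rfl h1, Function.update_self, add_assoc]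
  congr 1
  cases hv : v i₀ <;> cases hw : w i₀ <;> simp <;> decide

lemma par19_count {m : ℕ} {w w' : Fin m → Bool} (hww : w ≠ w') :
    2 * (Finset.univ.filter (fun v : Fin m → Bool => par19 v w ≠ par19 v w')).card = 2 ^ m := by
  classical
  obtain ⟨i₀, hi₀⟩ := Function.ne_iff.mp hww
  set P : (Fin m → Bool) → Prop := fun v => par19 v w ≠ par19 v w' with hP
  set flip : (Fin m → Bool) → (Fin m → Bool) := fun v => Function.update v i₀ (!v i₀) with hflip
  have hflipflip : ∀ v, flip (flip v) = v := by
    intro v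
    simp only [hflip, Function.update_self, Function.update_idem, Bool.not_not,
      Function.update_eq_self]
  have hswap : ∀ v, P (flip v) ↔ ¬ P v := by
    intro v
    simp only [hP, hflip, par19_update]
    have key : ∀ a b c d : ZMod 2, c ≠ d → (a + c ≠ b + d ↔ ¬ a ≠ b) := by decide
    cases hw : w i₀ <;> cases hw' : w' i₀
    · simp [hw, hw'] at hi₀
    · simpa using key _ _ 0 1 (by decide)
    · simpa using key _ _ 1 0 (by decide)
    · simp [hw, hw'] at hi₀
  show 2 * (Finset.univ.filter P).card = 2 ^ m
  have hcards : (Finset.univ.filter P).card = (Finset.univ.filter (fun v => ¬ P v)).card := by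
    apply Finset.card_bij' (fun v _ => flip v) (fun v _ => flip v)
    · intro v hv
      simp only [Finset.mem_filter, Finset.mem_univ, true_and] at hv ⊢
      exact fun hc => (hswap v).mp hc hv
    · intro v hv
      simp only [Finset.mem_filter, Finset.mem_univ, true_and] at hv ⊢
      exact (hswap v).mpr hv
    · intro v _; exact hflipflip v
    · intro v _; exact hflipflip v
  have htot := Finset.card_filter_add_card_filter_not
    (s := (Finset.univ : Finset (Fin m → Bool))) (p := P)
  rw [Finset.card_univ] at htot
  simp only [Fintype.card_fun, Fintype.card_bool, Fintype.card_fin] at htot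
  omega

theorem stmt19 {X : Type*} [DecidableEq X] {mX : MeasurableSpace X} (hmX : mX = ⊤)
    (hXinf : Infinite X) {Y : Type*} [Fintype Y] (hY : 2 ≤ Fintype.card Y)
    (k : ℕ) (hk : 0 < k)
    (ℋ : Set ((Fin k → X) → Y))
    (hℋ : ℋ = Set.range (fun h : X → Y =>
      fun z : Fin k → X => h (z ⟨k - 1, Nat.sub_lt hk Nat.one_pos⟩))) :
    -- (1) the `VCN_k`-dimension of `ℋ` is infinite
    (∀ n : ℕ, ∃ x : Fin (k - 1) → X, ∃ V : Finset X, V.card = n ∧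
      NatShatters
        {g : X → (Equiv.Perm (Fin k) → Y) | ∃ H ∈ ℋ, g = fun t σ =>
          H (fun i => if h : ((σ i : ℕ)) < k - 1 then x ⟨(σ i : ℕ), h⟩ else t)} V) ∧
    -- (2) `ℋ` fails the `k`-ary Haussler packing property w.r.t. the 0/1-loss
    ¬ ∃ M : ℝ → ℝ, ∀ ε : ℝ, 0 < ε → ε < 1 →
        ∀ μ : Measure X, IsProbabilityMeasure μ →
          ∃ ℋ' : Finset ((Fin k → X) → Y), ↑ℋ' ⊆ ℋ ∧ (ℋ'.card : ℝ) ≤ M ε ∧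
            ∀ F ∈ ℋ, ∃ H ∈ ℋ',
              ((Measure.pi fun _ : Fin k => μ)
                {z : Fin k → X |
                  (fun σ : Equiv.Perm (Fin k) => F (fun i => z (σ i))) ≠
                  (fun σ : Equiv.Perm (Fin k) => H (fun i => z (σ i)))}).toReal ≤ ε := by
  classical
  subst hmX
  obtain ⟨y₀, y₁, hy01⟩ := Fintype.exists_pair_of_one_lt_card (by omega : 1 < Fintype.card Y)
  set j₀ : Fin k := ⟨k - 1, Nat.sub_lt hk Nat.one_pos⟩ with hj₀
  have hkj : ¬ ((j₀ : ℕ) < k - 1) := by simp [hj₀]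
  constructor
  · -- Part (1)
    intro n
    obtain ⟨V', hV'⟩ := Infinite.exists_subset_card_eq X (n + 1)
    have hV'ne : V'.Nonempty := Finset.card_pos.mp (by omega : 0 < V'.card)
    obtain ⟨x₀, hx₀⟩ := hV'ne
    refine ⟨fun _ => x₀, V'.erase x₀, by rw [Finset.card_erase_of_mem hx₀, hV']; omega, ?_⟩
    refine ⟨fun _ _ => y₀,
      fun t σ => if ((σ j₀ : ℕ)) < k - 1 then y₀ else y₁, ?_, ?_⟩
    · intro a _ hc
      have h1 := congrFun hc (1 : Equiv.Perm (Fin k))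
      simp only [Equiv.Perm.coe_one, id_eq] at h1
      simp only [hkj, ↓reduceIte] at h1
      exact hy01 h1
    · intro U hU
      refine ⟨_, ⟨(fun z : Fin k → X => if z j₀ ∈ U then y₁ else y₀),
        by rw [hℋ]; exact ⟨fun t => if t ∈ U then y₁ else y₀, rfl⟩, rfl⟩, ?_⟩
      intro a ha
      funext σ
      have hx₀U : x₀ ∉ U := fun hmem => (Finset.notMem_erase x₀ V') (hU hmem)
      by_cases hc : ((σ j₀ : ℕ)) < k - 1 <;> by_cases haU : a ∈ U <;>
        simp [hc, haU, hx₀U]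
  · -- Part (2)
    rintro ⟨M, hM⟩
    letI : MeasurableSpace X := ⊤
    obtain ⟨m₀, hm₀⟩ := pow_unbounded_of_one_lt (M (1/5)) (one_lt_two (α := ℝ))
    set m := m₀ + 1 with hm
    obtain ⟨s, hs⟩ := Infinite.exists_subset_card_eq X (2 ^ m)
    let eqv : (Fin m → Bool) ≃ s := Fintype.equivOfCardEq (by simp [hs, Fintype.card_coe])
    let e : (Fin m → Bool) → X := fun v => (eqv v : X)
    have he : Function.Injective e := fun a b hab => eqv.injective (Subtype.ext hab)
    let d : X → (Fin m → Bool) := Function.invFun e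
    have hd : ∀ v, d (e v) = v := fun v => Function.leftInverse_invFun he v
    let hfun : (Fin m → Bool) → X → Y := fun w x => if par19 (d x) w = 1 then y₁ else y₀
    let Ffun : (Fin m → Bool) → (Fin k → X) → Y := fun w => fun z => hfun w (z j₀)
    have hF : ∀ w, Ffun w ∈ ℋ := fun w => by rw [hℋ]; exact ⟨hfun w, rfl⟩
    let μ : Measure X := (2 ^ m : ℝ≥0∞)⁻¹ • ∑ v : (Fin m → Bool), Measure.dirac (e v)
    have hμapp : ∀ B : Set X, μ B
        = (2 ^ m : ℝ≥0∞)⁻¹ * ∑ v : (Fin m → Bool), B.indicator (fun _ => (1 : ℝ≥0∞)) (e v) := by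
      intro B
      simp only [μ, Measure.smul_apply, Measure.finset_sum_apply, smul_eq_mul]
      congr 1
      exact Finset.sum_congr rfl fun v _ =>
        Measure.dirac_apply' _ MeasurableSpace.measurableSet_top
    have h2mne : (2 : ℝ≥0∞) ^ m ≠ 0 := by positivity
    have h2mnetop : (2 : ℝ≥0∞) ^ m ≠ ⊤ := ENNReal.pow_ne_top (by norm_num)
    haveI hμprob : IsProbabilityMeasure μ := by
      constructor
      rw [hμapp]
      simp only [Set.indicator_univ, Finset.sum_const, Finset.card_univ, nsmul_eq_mul, mul_one,
        Fintype.card_fun, Fintype.card_bool, Fintype.card_fin]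
      push_cast
      exact ENNReal.inv_mul_cancel h2mne h2mnetop
    have hdist : ∀ w w' : Fin m → Bool, w ≠ w' →
        μ {x | hfun w x ≠ hfun w' x} = 2⁻¹ := by
      intro w w' hww
      rw [hμapp]
      have hpt : ∀ v : Fin m → Bool,
          ({x | hfun w x ≠ hfun w' x}).indicator (fun _ => (1 : ℝ≥0∞)) (e v)
          = if par19 v w ≠ par19 v w' then (1 : ℝ≥0∞) else 0 := by
        intro v
        rw [Set.indicator_apply]
        refine if_congr ?_ rfl rfl
        simp only [Set.mem_setOf_eq, hfun, hd]
        have hcase : ∀ a : ZMod 2, a = 0 ∨ a = 1 := by decide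
        rcases hcase (par19 v w) with h1 | h1 <;> rcases hcase (par19 v w') with h2 | h2 <;>
          simp [h1, h2, hy01, Ne.symm hy01]
      rw [Finset.sum_congr rfl fun v _ => hpt v, Finset.sum_boole]
      have hcard : (Finset.univ.filter (fun v : Fin m → Bool =>
          par19 v w ≠ par19 v w')).card = 2 ^ m₀ := by
        have hcount := par19_count hww
        have h2 : (2:ℕ) ^ m = 2 * 2 ^ m₀ := by rw [hm]; ring
        omega
      rw [hcard]
      push_cast
      rw [hm, pow_succ, ENNReal.mul_inv (Or.inl (by positivity))
        (Or.inl (ENNReal.pow_ne_top (by norm_num)))]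
      rw [mul_comm ((2:ℝ≥0∞)^m₀)⁻¹ (2:ℝ≥0∞)⁻¹, mul_assoc]
      rw [ENNReal.inv_mul_cancel (by positivity) (ENNReal.pow_ne_top (by norm_num)), mul_one]
    have hpieval : ∀ B : Set X,
        Measure.pi (fun _ : Fin k => μ) ((fun z : Fin k → X => z j₀) ⁻¹' B) = μ B := by
      intro B
      rw [show (fun z : Fin k → X => z j₀) ⁻¹' B = Function.eval j₀ ⁻¹' B from rfl]
      rw [← Set.univ_pi_update_univ (α := fun _ : Fin k => X) j₀ B, Measure.pi_pi]
      rw [Fintype.prod_eq_single j₀ (fun i hi => by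
        rw [Function.update_of_ne hi]; exact measure_univ)]
      rw [Function.update_self]
    obtain ⟨ℋ', hsub, hcardℋ', hcover⟩ := hM (1/5) (by norm_num) (by norm_num) μ hμprob
    choose HH hHH hHdist using fun w => hcover (Ffun w) (hF w)
    have hcardlt : ℋ'.card < (Finset.univ : Finset (Fin m → Bool)).card := by
      rw [Finset.card_univ]
      simp only [Fintype.card_fun, Fintype.card_bool, Fintype.card_fin]
      have h1 : (ℋ'.card : ℝ) < 2 ^ m := by
        calc (ℋ'.card : ℝ) ≤ M (1/5) := hcardℋ'
          _ < 2 ^ m₀ := hm₀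
          _ ≤ 2 ^ m := by
              apply pow_le_pow_right₀ (by norm_num) (by omega)
      exact_mod_cast h1
    obtain ⟨w, _, w', _, hww, hHeq⟩ :=
      Finset.exists_ne_map_eq_of_card_lt_of_maps_to hcardlt (fun w _ => hHH w)
    obtain ⟨h', hH'eq⟩ : HH w ∈ Set.range (fun h : X → Y =>
        fun z : Fin k → X => h (z ⟨k - 1, Nat.sub_lt hk Nat.one_pos⟩)) := by
      rw [← hℋ]; exact hsub (hHH w)
    have key : ∀ u, HH u = HH w → (μ {x | hfun u x ≠ h' x}).toReal ≤ 1/5 := by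
      intro u hu
      have hb := hHdist u
      rw [hu] at hb
      have hsub2 : (fun z : Fin k → X => z j₀) ⁻¹' {x | hfun u x ≠ h' x} ⊆
          {z : Fin k → X |
            (fun σ : Equiv.Perm (Fin k) => Ffun u (fun i => z (σ i))) ≠
            (fun σ : Equiv.Perm (Fin k) => HH w (fun i => z (σ i)))} := by
        intro z hz hc
        have h1 := congrFun hc (1 : Equiv.Perm (Fin k))
        simp only [Equiv.Perm.coe_one, id_eq] at h1
        rw [← hH'eq] at h1
        exact hz h1
      have h1 : μ {x | hfun u x ≠ h' x} ≤ Measure.pi (fun _ : Fin k => μ)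
          {z : Fin k → X |
            (fun σ : Equiv.Perm (Fin k) => Ffun u (fun i => z (σ i))) ≠
            (fun σ : Equiv.Perm (Fin k) => HH w (fun i => z (σ i)))} := by
        rw [← hpieval]
        exact measure_mono hsub2
      have h2 := ENNReal.toReal_mono (measure_ne_top _ _) h1
      exact h2.trans hb
    have hw1 := key w rfl
    have hw2 := key w' hHeq.symm
    have hsub3 : {x | hfun w x ≠ hfun w' x} ⊆
        {x | hfun w x ≠ h' x} ∪ {x | hfun w' x ≠ h' x} := by
      intro x hx
      rw [Set.mem_union]
      by_contra hc
      push_neg at hc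
      simp only [Set.mem_setOf_eq, not_not] at hc
      exact hx (hc.1.trans hc.2.symm)
    have h4 : μ {x | hfun w x ≠ hfun w' x} ≤
        μ {x | hfun w x ≠ h' x} + μ {x | hfun w' x ≠ h' x} :=
      le_trans (measure_mono hsub3) (measure_union_le _ _)
    have h5 := ENNReal.toReal_mono
      (ENNReal.add_ne_top.mpr ⟨measure_ne_top _ _, measure_ne_top _ _⟩) h4
    rw [ENNReal.toReal_add (measure_ne_top _ _) (measure_ne_top _ _)] at h5
    rw [hdist w w' hww] at h5
    simp only [ENNReal.toReal_inv, ENNReal.toReal_ofNat] at h5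
    linarith
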